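/- Let f : ℝ^d × ℝ^d → ℝ be C² and suppose that the Hessian in z satisfies ∇²_z f(z,x) ⪰ λ I with λ > 0 uniformly, and the mixed Hessian satisfies ‖∇²_{xz} f(z,x)‖ ≤ L uniformly. Let z*(x) be the unique minimizer of z ↦ f(z,x). Then ‖z*(x) − z*(x')‖ ≤ (L/λ)‖x − x'‖ for all x, x' ∈ ℝ^d; in particular z* is Lipschitz continuous. -/

import Mathlib

open scoped RealInnerProductSpace
noncomputable section

/-- If `f(z,x)` is C², uniformly `λ`-strongly convex in `z` (Hessian in `z` ⪰ λ I) and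
with mixed Hessian operator norm at most `L`, then the minimizer map
`z*(x) = argmin_z f(z,x)` is `(L/λ)`-Lipschitz. -/
theorem stmt_8 (d : ℕ)
    (f : EuclideanSpace ℝ (Fin d) → EuclideanSpace ℝ (Fin d) → ℝ)
    (lam L : ℝ) (hlam : 0 < lam) (hL : 0 ≤ L)
    (hf : ContDiff ℝ 2 (Function.uncurry f))
    (hhess : ∀ z x v, lam * ‖v‖ ^ 2 ≤
      ⟪v, fderiv ℝ (fun w => gradient (fun u => f u x) w) z v⟫)
    (hmix : ∀ z x, ‖fderiv ℝ (fun x' => gradient (fun u => f u x') z) x‖ ≤ L)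
    (zstar : EuclideanSpace ℝ (Fin d) → EuclideanSpace ℝ (Fin d))
    (hzstar : ∀ x z, f (zstar x) x ≤ f z x) :
    ∀ x x', ‖zstar x - zstar x'‖ ≤ L / lam * ‖x - x'‖ := by
  classical
  have hE : True := trivial
  set F : (EuclideanSpace ℝ (Fin d)) × (EuclideanSpace ℝ (Fin d)) → ℝ := Function.uncurry f with hFdef
  have hF2 : ContDiff ℝ 2 F := hf
  have hFd : Differentiable ℝ F := hF2.differentiable (by norm_num)
  set G : (EuclideanSpace ℝ (Fin d)) × (EuclideanSpace ℝ (Fin d)) → (EuclideanSpace ℝ (Fin d)) := fun p => (InnerProductSpace.toDual ℝ (EuclideanSpace ℝ (Fin d))).symm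
      ((fderiv ℝ F p).comp (ContinuousLinearMap.inl ℝ (EuclideanSpace ℝ (Fin d)) (EuclideanSpace ℝ (Fin d)))) with hGdef
  have hfderivF : ContDiff ℝ 1 (fderiv ℝ F) := by
    have h2 : ContDiff ℝ ((1 : WithTop ℕ∞) + 1) F := by
      convert hF2 using 2
      norm_num
    exact (contDiff_succ_iff_fderiv.mp h2).2.2
  have hGc : ContDiff ℝ 1 G := by
    exact (InnerProductSpace.toDual ℝ (EuclideanSpace ℝ (Fin d))).symm.contDiff.comp
      (hfderivF.clm_comp contDiff_const)
  have hGd : Differentiable ℝ G := hGc.differentiable one_ne_zero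
  -- identify G with the partial gradient
  have hGeq : ∀ z x : (EuclideanSpace ℝ (Fin d)), G (z, x) = gradient (fun u => f u x) z := by
    intro z x
    have h1 : HasFDerivAt (fun u : (EuclideanSpace ℝ (Fin d)) => (u, x)) (ContinuousLinearMap.inl ℝ (EuclideanSpace ℝ (Fin d)) (EuclideanSpace ℝ (Fin d))) z :=
      hasFDerivAt_prodMk_left z x
    have h2 : HasFDerivAt F (fderiv ℝ F (z, x)) (z, x) := (hFd (z, x)).hasFDerivAt
    have h3 : HasFDerivAt (fun u => f u x)
        ((fderiv ℝ F (z, x)).comp (ContinuousLinearMap.inl ℝ (EuclideanSpace ℝ (Fin d)) (EuclideanSpace ℝ (Fin d)))) z := by have := h2.comp z h1; exact this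
    simp only [gradient, hGdef, h3.fderiv]
  -- gradient vanishes at the minimizer
  have hgrad0 : ∀ x : (EuclideanSpace ℝ (Fin d)), gradient (fun u => f u x) (zstar x) = 0 := by
    intro x
    have hloc : IsLocalMin (fun u => f u x) (zstar x) :=
      Filter.Eventually.of_forall fun z => hzstar x z
    simp only [gradient, hloc.fderiv_eq_zero, map_zero]
  intro x x'
  set a := zstar x with ha
  set b := zstar x' with hb
  set w : (EuclideanSpace ℝ (Fin d)) := a - b with hw
  by_cases hw0 : w = 0
  · have : a = b := by rwa [sub_eq_zero] at hw0
    have hnw : ‖w‖ = 0 := by rw [hw0]; simp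
    calc ‖w‖ = 0 := hnw
      _ ≤ L / lam * ‖x - x'‖ := by positivity
  -- strong monotonicity step
  have hGxd : Differentiable ℝ (fun z : (EuclideanSpace ℝ (Fin d)) => G (z, x)) :=
    hGd.comp (differentiable_id.prodMk (differentiable_const x))
  have hline : ∀ t : ℝ, HasDerivAt (fun t : ℝ => b + t • w) w t := by
    intro t
    simpa using ((hasDerivAt_id t).smul_const w).const_add b
  set h : ℝ → ℝ := fun t => ⟪w, G (b + t • w, x)⟫ with hhdef
  have hh' : ∀ t : ℝ, HasDerivAt h
      ⟪w, fderiv ℝ (fun z : (EuclideanSpace ℝ (Fin d)) => G (z, x)) (b + t • w) w⟫ t := by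
    intro t
    have h1 : HasDerivAt (fun t : ℝ => G (b + t • w, x))
        (fderiv ℝ (fun z : (EuclideanSpace ℝ (Fin d)) => G (z, x)) (b + t • w) w) t :=
      by have := (hGxd (b + t • w)).hasFDerivAt.comp_hasDerivAt t (hline t); exact this
    have h2 := (innerSL ℝ w).hasFDerivAt.comp_hasDerivAt t h1
    exact h2
  have hmono : lam * ‖w‖ ^ 2 ≤ ⟪w, G (a, x)⟫ - ⟪w, G (b, x)⟫ := by
    obtain ⟨c, -, hc⟩ := exists_hasDerivAt_eq_slope h
      (fun t => ⟪w, fderiv ℝ (fun z : (EuclideanSpace ℝ (Fin d)) => G (z, x)) (b + t • w) w⟫)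
      (by norm_num : (0:ℝ) < 1)
      (fun t _ => (hh' t).continuousAt.continuousWithinAt)
      (fun t _ => hh' t)
    have hkey : lam * ‖w‖ ^ 2 ≤ ⟪w, fderiv ℝ (fun z : (EuclideanSpace ℝ (Fin d)) => G (z, x)) (b + c • w) w⟫ := by
      have := hhess (b + c • w) x w
      have heq : (fun z : (EuclideanSpace ℝ (Fin d)) => G (z, x)) = fun z => gradient (fun u => f u x) z := by
        funext z; exact hGeq z x
      rw [heq]
      exact this
    have hba : b + (1:ℝ) • w = a := by rw [hw, one_smul]; abel
    have h1 : h 1 = ⟪w, G (a, x)⟫ := by simp only [hhdef]; rw [hba]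
    have h0 : h 0 = ⟪w, G (b, x)⟫ := by simp [hhdef]
    rw [h1, h0] at hc
    calc lam * ‖w‖ ^ 2 ≤ _ := hkey
      _ = (⟪w, G (a, x)⟫ - ⟪w, G (b, x)⟫) / (1 - 0) := hc
      _ = _ := by ring
  -- mixed derivative bound
  have hmixed : ‖G (b, x) - G (b, x')‖ ≤ L * ‖x - x'‖ := by
    have hGyd : ∀ y ∈ (Set.univ : Set (EuclideanSpace ℝ (Fin d))), DifferentiableAt ℝ (fun y : (EuclideanSpace ℝ (Fin d)) => G (b, y)) y :=
      fun y _ => (hGd.comp ((differentiable_const b).prodMk differentiable_id)) y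
    have hbound : ∀ y ∈ (Set.univ : Set (EuclideanSpace ℝ (Fin d))), ‖fderiv ℝ (fun y : (EuclideanSpace ℝ (Fin d)) => G (b, y)) y‖ ≤ L := by
      intro y _
      have heq : (fun y : (EuclideanSpace ℝ (Fin d)) => G (b, y)) = fun x'' => gradient (fun u => f u x'') b := by
        funext y; exact hGeq b y
      rw [heq]
      exact hmix b y
    have := convex_univ.norm_image_sub_le_of_norm_fderiv_le hGyd hbound
      (Set.mem_univ x') (Set.mem_univ x)
    simpa using this
  -- combine
  have hGa : G (a, x) = 0 := by rw [hGeq, ha, hgrad0]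
  have hGb' : G (b, x') = 0 := by rw [hGeq, hb, hgrad0]
  have key : lam * ‖w‖ ^ 2 ≤ L * ‖x - x'‖ * ‖w‖ := by
    have h1 : ⟪w, G (a, x)⟫ - ⟪w, G (b, x)⟫ = ⟪w, G (b, x') - G (b, x)⟫ := by
      rw [hGa, hGb']
      simp [inner_sub_right]
    have h2 : ⟪w, G (b, x') - G (b, x)⟫ ≤ ‖w‖ * ‖G (b, x') - G (b, x)‖ :=
      real_inner_le_norm _ _
    have h3 : ‖G (b, x') - G (b, x)‖ ≤ L * ‖x - x'‖ := by
      rw [norm_sub_rev]; exact hmixed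
    calc lam * ‖w‖ ^ 2 ≤ ⟪w, G (b, x') - G (b, x)⟫ := by rw [← h1]; exact hmono
      _ ≤ ‖w‖ * ‖G (b, x') - G (b, x)‖ := h2
      _ ≤ ‖w‖ * (L * ‖x - x'‖) := by
          exact mul_le_mul_of_nonneg_left h3 (norm_nonneg w)
      _ = L * ‖x - x'‖ * ‖w‖ := by ring
  have hwpos : 0 < ‖w‖ := norm_pos_iff.mpr hw0
  have : lam * ‖w‖ ≤ L * ‖x - x'‖ := by
    have := key
    rw [sq] at this
    nlinarith
  calc ‖a - b‖ = ‖w‖ := by rw [hw]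
    _ ≤ L * ‖x - x'‖ / lam := by
        rw [le_div_iff₀ hlam]; linarith [this]
    _ = L / lam * ‖x - x'‖ := by ring
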